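/- Let R be a ring and s, t central invertible elements of R. Then R is a CN ring if and only if H_{(s,t)}(R) is a CN ring (with respect to the center of H_{(s,t)}(R) and the nilpotent elements of H_{(s,t)}(R)). -/

import Mathlib

/-- An element of a ring has a *CN-decomposition* if it is a sum of a central
element and a nilpotent element. -/
def HasCNDecomp {R : Type*} [Ring R] (a : R) : Prop :=
  ∃ c n : R, c ∈ Set.center R ∧ IsNilpotent n ∧ a = c + n

/-- A ring is a *CN ring* if every element has a CN-decomposition. -/
def IsCNRing (R : Type*) [Ring R] : Prop := ∀ a : R, HasCNDecomp a

/-- `H_{(s,t)}(R)`: the subring of `M₃(R)` of matrices of the form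
`[[a, 0, 0], [c, d, e], [0, 0, f]]` with `a - d = s*c` and `d - f = t*e`,
for central elements `s, t` of `R`. -/
def Hst {R : Type*} [Ring R] (s t : R) (hs : s ∈ Set.center R) (ht : t ∈ Set.center R) :
    Subring (Matrix (Fin 3) (Fin 3) R) where
  carrier := {A | A 0 1 = 0 ∧ A 0 2 = 0 ∧ A 2 0 = 0 ∧ A 2 1 = 0 ∧
    A 0 0 - A 1 1 = s * A 1 0 ∧ A 1 1 - A 2 2 = t * A 1 2}
  zero_mem' := ⟨rfl, rfl, rfl, rfl, by simp, by simp⟩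
  one_mem' := by
    refine ⟨?_, ?_, ?_, ?_, ?_, ?_⟩ <;> simp [Matrix.one_apply]
  add_mem' := by
    rintro A B ⟨hA1, hA2, hA3, hA4, hA5, hA6⟩ ⟨hB1, hB2, hB3, hB4, hB5, hB6⟩
    refine ⟨?_, ?_, ?_, ?_, ?_, ?_⟩ <;> simp only [Matrix.add_apply]
    · rw [hA1, hB1, add_zero]
    · rw [hA2, hB2, add_zero]
    · rw [hA3, hB3, add_zero]
    · rw [hA4, hB4, add_zero]
    · rw [mul_add, ← hA5, ← hB5]; abel
    · rw [mul_add, ← hA6, ← hB6]; abel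
  neg_mem' := by
    rintro A ⟨hA1, hA2, hA3, hA4, hA5, hA6⟩
    refine ⟨?_, ?_, ?_, ?_, ?_, ?_⟩ <;> simp only [Matrix.neg_apply]
    · rw [hA1, neg_zero]
    · rw [hA2, neg_zero]
    · rw [hA3, neg_zero]
    · rw [hA4, neg_zero]
    · rw [mul_neg, ← hA5]; abel
    · rw [mul_neg, ← hA6]; abel
  mul_mem' := by
    rintro A B ⟨hB1, hB2, hB3, hB4, hB5, hB6⟩ ⟨hC1, hC2, hC3, hC4, hC5, hC6⟩
    refine ⟨?_, ?_, ?_, ?_, ?_, ?_⟩ <;> rw [Matrix.mul_apply, Fin.sum_univ_three]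
    · rw [hB1, hC1, hB2, hC4, mul_zero, zero_mul, zero_mul]; simp
    · rw [hB1, hB2, hC2]; simp
    · rw [hB3, hB4, hC3]; simp
    · rw [hB3, hB4, hC4]; simp
    · rw [Matrix.mul_apply, Fin.sum_univ_three, hB1, hB2, hC1, hC4, hC3]
      have key : A 0 0 * B 0 0 - A 1 1 * B 1 1 =
          (A 0 0 - A 1 1) * B 0 0 + A 1 1 * (B 0 0 - B 1 1) := by noncomm_ring
      have h1 : A 1 1 * (s * B 1 0) = s * (A 1 1 * B 1 0) := by
        rw [← mul_assoc, ← hs.comm, mul_assoc]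
      simp only [zero_mul, mul_zero, add_zero, zero_add]
      rw [key, hB5, hC5, h1, mul_assoc, ← mul_add,
        Matrix.mul_apply, Fin.sum_univ_three, hC3, mul_zero, add_zero]
    · rw [Matrix.mul_apply, Fin.sum_univ_three, hC1, hC4, hB3, hB4, hC2]
      have key : A 1 1 * B 1 1 - A 2 2 * B 2 2 =
          A 1 1 * (B 1 1 - B 2 2) + (A 1 1 - A 2 2) * B 2 2 := by noncomm_ring
      have h1 : A 1 1 * (t * B 1 2) = t * (A 1 1 * B 1 2) := by
        rw [← mul_assoc, ← ht.comm, mul_assoc]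
      simp only [zero_mul, mul_zero, add_zero, zero_add]
      rw [key, hB6, hC6, h1, mul_assoc, ← mul_add,
        Matrix.mul_apply, Fin.sum_univ_three, hC2, mul_zero, zero_add]

private lemma central_comm {R : Type*} [Ring R] {z : R} (hz : z ∈ Set.center R) (x : R) :
    x * z = z * x := Semigroup.mem_center_iff.mp hz x

private lemma sub_mem_center' {R : Type*} [Ring R] {a b : R} (ha : a ∈ Set.center R)
    (hb : b ∈ Set.center R) : a - b ∈ Set.center R := by
  rw [sub_eq_add_neg]; exact Set.add_mem_center ha (Set.neg_mem_center hb)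

private lemma key_comm {R : Type*} [Ring R] {s s' za zd : R} (p q r : R)
    (hza : za ∈ Set.center R) (hzd : zd ∈ Set.center R) (hs' : s' ∈ Set.center R)
    (hs's : s' * s = 1) (hpq : p - r = s * q) :
    q * za + r * (s' * (za - zd)) = s' * (za - zd) * p + zd * q := by
  have hsub : za - zd ∈ Set.center R := sub_mem_center' hza hzd
  have hc' : s' * (za - zd) ∈ Set.center R := Set.mul_mem_center hs' hsub
  have h2 : s' * (za - zd) * (p - r) = (za - zd) * q := by
    rw [hpq, ← mul_assoc]
    congr 1
    rw [mul_assoc, ← central_comm hsub s, ← mul_assoc, hs's, one_mul]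
  rw [mul_sub, sub_eq_iff_eq_add] at h2
  rw [h2, central_comm hza q, central_comm hc' r, sub_mul]
  abel

private lemma key_comm2 {R : Type*} [Ring R] {s s' za zd : R} (p q r : R)
    (hza : za ∈ Set.center R) (hzd : zd ∈ Set.center R) (hs' : s' ∈ Set.center R)
    (hs's : s' * s = 1) (hpq : p - r = s * q) :
    p * (s' * (za - zd)) + q * zd = za * q + s' * (za - zd) * r := by
  have hsub : za - zd ∈ Set.center R := sub_mem_center' hza hzd
  have hc' : s' * (za - zd) ∈ Set.center R := Set.mul_mem_center hs' hsub
  have h2 : s' * (za - zd) * (p - r) = (za - zd) * q := by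
    rw [hpq, ← mul_assoc]
    congr 1
    rw [mul_assoc, ← central_comm hsub s, ← mul_assoc, hs's, one_mul]
  rw [mul_sub, sub_eq_iff_eq_add] at h2
  rw [central_comm hc' p, h2, central_comm hzd q, sub_mul]
  abel

private lemma sum_pow_formula {S : Type*} [Ring S] (D L : S)
    (hL : ∀ k : ℕ, L * (D ^ k * L) = 0) (n : ℕ) :
    (D + L) ^ n = D ^ n + ∑ i ∈ Finset.range n, D ^ i * L * D ^ (n - 1 - i) := by
  induction n with
  | zero => simp
  | succ n ih =>
    rw [pow_succ, ih, add_mul, mul_add, mul_add, Finset.sum_mul, Finset.sum_mul]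
    have e1 : ∑ i ∈ Finset.range n, D ^ i * L * D ^ (n - 1 - i) * L = 0 := by
      refine Finset.sum_eq_zero fun i _ => ?_
      rw [mul_assoc (D ^ i * L), mul_assoc (D ^ i), hL, mul_zero]
    have e2 : ∀ i ∈ Finset.range n, D ^ i * L * D ^ (n - 1 - i) * D = D ^ i * L * D ^ (n - i) := by
      intro i hi
      rw [mul_assoc (D ^ i * L), ← pow_succ]
      congr 2
      have := Finset.mem_range.mp hi
      omega
    rw [Finset.sum_congr rfl e2, e1, add_zero, ← pow_succ]
    simp only [Nat.add_sub_cancel]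
    rw [Finset.sum_range_succ, Nat.sub_self, pow_zero, mul_one]
    abel

private lemma isNilpotent_add_of {S : Type*} [Ring S] (D L : S) (hD : IsNilpotent D)
    (hL : ∀ k : ℕ, L * (D ^ k * L) = 0) : IsNilpotent (D + L) := by
  obtain ⟨m, hm⟩ := hD
  refine ⟨2 * m, ?_⟩
  rw [sum_pow_formula D L hL]
  have key : ∀ j : ℕ, m ≤ j → D ^ j = 0 := by
    intro j hj
    rw [show j = m + (j - m) by omega, pow_add, hm, zero_mul]
  rw [key _ (by omega), zero_add]
  refine Finset.sum_eq_zero fun i hi => ?_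
  have him := Finset.mem_range.mp hi
  rcases le_or_gt m i with h | h
  · rw [key i h, zero_mul, zero_mul]
  · rw [key (2 * m - 1 - i) (by omega), mul_zero]

private lemma hst_nilpotent {R : Type*} [Ring R] (M : Matrix (Fin 3) (Fin 3) R)
    (h01 : M 0 1 = 0) (h02 : M 0 2 = 0) (h20 : M 2 0 = 0) (h21 : M 2 1 = 0)
    (k0 : IsNilpotent (M 0 0)) (k1 : IsNilpotent (M 1 1)) (k2 : IsNilpotent (M 2 2)) :
    IsNilpotent M := by
  set v : Fin 3 → R := ![M 0 0, M 1 1, M 2 2] with hv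
  have hM : M = Matrix.diagonal v + (M - Matrix.diagonal v) := by abel
  rw [hM]
  apply isNilpotent_add_of
  · obtain ⟨a, ha⟩ := k0; obtain ⟨b, hb⟩ := k1; obtain ⟨c, hc⟩ := k2
    refine ⟨a + b + c, ?_⟩
    rw [Matrix.diagonal_pow]
    have : v ^ (a + b + c) = 0 := by
      funext i
      fin_cases i <;> simp [hv, Pi.pow_apply, pow_add, ha, hb, hc]
    rw [this]; ext i j; simp [Matrix.diagonal_apply]
  · intro k
    rw [Matrix.diagonal_pow]
    set w := v ^ k
    ext i j
    fin_cases i <;> fin_cases j <;>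
      simp [Matrix.mul_apply, Fin.sum_univ_three, Matrix.sub_apply, Matrix.diagonal_apply,
        hv, h01, h02, h20, h21]

/-- Projection onto the `(0,0)` entry is a ring hom on `Hst`. -/
private def HstProj {R : Type*} [Ring R] (s t : R) (hs : s ∈ Set.center R)
    (ht : t ∈ Set.center R) : Hst s t hs ht →+* R where
  toFun X := (X : Matrix (Fin 3) (Fin 3) R) 0 0
  map_one' := Matrix.one_apply_eq _
  map_mul' X Y := by
    show ((X : Matrix (Fin 3) (Fin 3) R) * Y) 0 0 = _
    rw [Matrix.mul_apply, Fin.sum_univ_three, X.2.1, X.2.2.1, zero_mul, zero_mul,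
      add_zero, add_zero]
  map_zero' := rfl
  map_add' X Y := rfl

/-- Diagonal embedding of `R` into `Hst`. -/
private def HstDiag {R : Type*} [Ring R] (s t : R) (hs : s ∈ Set.center R)
    (ht : t ∈ Set.center R) : R →+* Hst s t hs ht where
  toFun r := ⟨Matrix.diagonal (fun _ => r),
    by simp [Matrix.diagonal_apply], by simp [Matrix.diagonal_apply],
    by simp [Matrix.diagonal_apply], by simp [Matrix.diagonal_apply],
    by simp [Matrix.diagonal_apply], by simp [Matrix.diagonal_apply]⟩
  map_one' := Subtype.ext (by simp)
  map_mul' x y := Subtype.ext (by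
    show Matrix.diagonal _ = Matrix.diagonal _ * Matrix.diagonal _
    rw [Matrix.diagonal_mul_diagonal])
  map_zero' := Subtype.ext (by simp)
  map_add' x y := Subtype.ext (by
    show Matrix.diagonal _ = Matrix.diagonal _ + Matrix.diagonal _
    rw [Matrix.diagonal_add])

/-- For central units `s, t` of `R`, the ring `R` is a CN ring iff
`H_{(s,t)}(R)` is a CN ring. -/
theorem isCNRing_iff_Hst {R : Type*} [Ring R] (s t : R)
    (hs : s ∈ Set.center R) (ht : t ∈ Set.center R)
    (hsu : IsUnit s) (htu : IsUnit t) :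
    IsCNRing R ↔ IsCNRing (Hst s t hs ht) := by
  obtain ⟨u, hu⟩ := hsu
  obtain ⟨w, hw⟩ := htu
  set s' : R := ↑u⁻¹ with hs'def
  set t' : R := ↑w⁻¹ with ht'def
  have hss' : s * s' = 1 := by rw [← hu]; exact_mod_cast u.mul_inv
  have hs's : s' * s = 1 := by rw [← hu]; exact_mod_cast u.inv_mul
  have htt' : t * t' = 1 := by rw [← hw]; exact_mod_cast w.mul_inv
  have ht't : t' * t = 1 := by rw [← hw]; exact_mod_cast w.inv_mul
  have hs'c : s' ∈ Set.center R := by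
    rw [Semigroup.mem_center_iff]
    intro x
    calc x * s' = s' * s * (x * s') := by rw [hs's, one_mul]
    _ = s' * (s * x * s') := by rw [mul_assoc, ← mul_assoc s x s']
    _ = s' * (x * s * s') := by rw [← central_comm hs x]
    _ = s' * x := by rw [mul_assoc x s s', hss', mul_one]
  have ht'c : t' ∈ Set.center R := by
    rw [Semigroup.mem_center_iff]
    intro x
    calc x * t' = t' * t * (x * t') := by rw [ht't, one_mul]
    _ = t' * (t * x * t') := by rw [mul_assoc, ← mul_assoc t x t']
    _ = t' * (x * t * t') := by rw [← central_comm ht x]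
    _ = t' * x := by rw [mul_assoc x t t', htt', mul_one]
  constructor
  · intro hR A
    obtain ⟨h01, h02, h20, h21, h5, h6⟩ := A.2
    obtain ⟨za, na, hza, hna, ha⟩ := hR ((A : Matrix (Fin 3) (Fin 3) R) 0 0)
    obtain ⟨zd, nd, hzd, hnd, hd⟩ := hR ((A : Matrix (Fin 3) (Fin 3) R) 1 1)
    obtain ⟨zf, nf, hzf, hnf, hf⟩ := hR ((A : Matrix (Fin 3) (Fin 3) R) 2 2)
    have hCmem : (Matrix.of ![![za, 0, 0], ![s' * (za - zd), zd, t' * (zd - zf)], ![0, 0, zf]])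
        ∈ Hst s t hs ht := by
      refine ⟨rfl, rfl, rfl, rfl, ?_, ?_⟩
      · show za - zd = s * (s' * (za - zd))
        rw [← mul_assoc, hss', one_mul]
      · show zd - zf = t * (t' * (zd - zf))
        rw [← mul_assoc, htt', one_mul]
    set C : Hst s t hs ht := ⟨_, hCmem⟩ with hC
    refine ⟨C, A - C, ?_, ?_, by abel⟩
    · rw [Semigroup.mem_center_iff]
      intro B
      obtain ⟨g01, g02, g20, g21, g5, g6⟩ := B.2
      apply Subtype.ext
      show (B : Matrix (Fin 3) (Fin 3) R) * _ = _ * (B : Matrix (Fin 3) (Fin 3) R)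
      ext i j
      fin_cases i <;> fin_cases j <;>
        simp [Matrix.mul_apply, Fin.sum_univ_three, g01, g02, g20, g21, hC]
      · exact central_comm hza _
      · exact key_comm _ _ _ hza hzd hs'c hs's g5
      · exact central_comm hzd _
      · exact key_comm2 _ _ _ hzd hzf ht'c ht't g6
      · exact central_comm hzf _
    · obtain ⟨n01, n02, n20, n21, n5, n6⟩ := (A - C).2
      have hnil : IsNilpotent ((A - C : Hst s t hs ht) : Matrix (Fin 3) (Fin 3) R) := by
        apply hst_nilpotent _ n01 n02 n20 n21
        · have : ((A - C : Hst s t hs ht) : Matrix (Fin 3) (Fin 3) R) 0 0 = na := by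
            push_cast
            simp only [Matrix.sub_apply, hC]
            rw [ha]
            show za + na - za = na
            abel
          rw [this]; exact hna
        · have : ((A - C : Hst s t hs ht) : Matrix (Fin 3) (Fin 3) R) 1 1 = nd := by
            push_cast
            simp only [Matrix.sub_apply, hC]
            rw [hd]
            show zd + nd - zd = nd
            abel
          rw [this]; exact hnd
        · have : ((A - C : Hst s t hs ht) : Matrix (Fin 3) (Fin 3) R) 2 2 = nf := by
            push_cast
            simp only [Matrix.sub_apply, hC]
            rw [hf]
            show zf + nf - zf = nf
            abel
          rw [this]; exact hnf
      obtain ⟨k, hk⟩ := hnil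
      exact ⟨k, Subtype.ext (by push_cast; exact hk)⟩
  · intro hH a
    obtain ⟨C, N, hC, hN, heq⟩ := hH (HstDiag s t hs ht a)
    refine ⟨HstProj s t hs ht C, HstProj s t hs ht N, ?_, hN.map _, ?_⟩
    · rw [Semigroup.mem_center_iff]
      intro g
      have h := Semigroup.mem_center_iff.mp hC (HstDiag s t hs ht g)
      have h2 := congrArg (HstProj s t hs ht) h
      rw [map_mul, map_mul] at h2
      have hg : HstProj s t hs ht (HstDiag s t hs ht g) = g := by
        show Matrix.diagonal (fun _ => g) 0 0 = g
        exact Matrix.diagonal_apply_eq _ _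
      rwa [hg] at h2
    · have h2 := congrArg (HstProj s t hs ht) heq
      rw [map_add] at h2
      have hg : HstProj s t hs ht (HstDiag s t hs ht a) = a := by
        show Matrix.diagonal (fun _ => a) 0 0 = a
        exact Matrix.diagonal_apply_eq _ _
      rwa [hg] at h2
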